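/- Let g : [-Q̄, Q̄] → ℝ be a continuous concave function, k ∈ ℝ, Q̃ ∈ [-Q̄, Q̄], and define φ(q) := k·q + g(Q̃ - q) for q ∈ [Q̃ - Q̄, Q̃ + Q̄]. Then φ is continuous and concave, its left derivative satisfies φ'₋(q) = k - g'₊(Q̃ - q), and setting Q* := min(inf{R ∈ [-Q̄, Q̄) : g'₊(R) ≤ k}, Q̄), the point Q̃ - Q* maximizes φ over [0, Q̃ + Q̄]. -/
import Mathlib

open Set Filter

-- slope lemma A: right derivative at t is ≤ slope over [x,t] for x < t (concave)
lemma lemA {a b : ℝ} {f fp : ℝ → ℝ}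
    (hconc : ConcaveOn ℝ (Set.Icc a b) f)
    (hfp : ∀ R ∈ Set.Ico a b,
      Filter.Tendsto (fun h => (f (R + h) - f R) / h) (nhdsWithin 0 (Set.Ioi 0)) (nhds (fp R)))
    {x t : ℝ} (hax : a ≤ x) (hxt : x < t) (htb : t < b) :
    fp t ≤ (f t - f x) / (t - x) := by
  have ht : t ∈ Set.Ico a b := ⟨le_of_lt (lt_of_le_of_lt hax hxt), htb⟩
  refine le_of_tendsto (hfp t ht) ?_
  have hmem : Set.Ioo (0:ℝ) (b - t) ∈ nhdsWithin (0:ℝ) (Set.Ioi 0) :=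
    Ioo_mem_nhdsGT_of_mem ⟨le_refl 0, by linarith⟩
  filter_upwards [hmem] with d hd
  have h1 : x ∈ Set.Icc a b := ⟨hax, by linarith [hd.2]⟩
  have h2 : t + d ∈ Set.Icc a b := ⟨by linarith [hd.1], by linarith [hd.2]⟩
  have := hconc.slope_anti_adjacent h1 h2 hxt (by linarith [hd.1])
  simpa using this

-- slope lemma B: slope over [t,x] ≤ right derivative at t for t < x (concave)
lemma lemB {a b : ℝ} {f fp : ℝ → ℝ}
    (hconc : ConcaveOn ℝ (Set.Icc a b) f)
    (hfp : ∀ R ∈ Set.Ico a b,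
      Filter.Tendsto (fun h => (f (R + h) - f R) / h) (nhdsWithin 0 (Set.Ioi 0)) (nhds (fp R)))
    {t x : ℝ} (hat : a ≤ t) (htx : t < x) (hxb : x ≤ b) :
    (f x - f t) / (x - t) ≤ fp t := by
  have ht : t ∈ Set.Ico a b := ⟨hat, lt_of_lt_of_le htx hxb⟩
  refine ge_of_tendsto (hfp t ht) ?_
  have hmem : Set.Ioo (0:ℝ) (x - t) ∈ nhdsWithin (0:ℝ) (Set.Ioi 0) :=
    Ioo_mem_nhdsGT_of_mem ⟨le_refl 0, by linarith⟩
  filter_upwards [hmem] with d hd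
  have h1 : t ∈ Set.Icc a b := ⟨hat, le_of_lt (lt_of_lt_of_le htx hxb)⟩
  have h2 : t + d ∈ Set.Icc a b := ⟨by linarith [hd.1], by linarith [hd.2]⟩
  have h3 : x ∈ Set.Icc a b := ⟨by linarith, hxb⟩
  have key := hconc.neg.secant_mono h1 h2 h3 (by intro h; nlinarith [hd.1])
    (by intro h; nlinarith) (by linarith [hd.2])
  simp only [Pi.neg_apply] at key
  have e1 : (-f (t+d) - -f t) / (t + d - t) = -((f (t+d) - f t)/d) := by
    rw [show t + d - t = d by ring]; ring
  have e2 : (-f x - -f t) / (x - t) = -((f x - f t)/(x-t)) := by ring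
  rw [e1, e2] at key
  linarith

-- main max lemma
lemma maxlem {a b : ℝ} (hab : a ≤ b) {f fp : ℝ → ℝ}
    (hcont : ContinuousOn f (Set.Icc a b))
    (hconc : ConcaveOn ℝ (Set.Icc a b) f)
    (hfp : ∀ R ∈ Set.Ico a b,
      Filter.Tendsto (fun h => (f (R + h) - f R) / h) (nhdsWithin 0 (Set.Ioi 0)) (nhds (fp R)))
    {c : ℝ} (hc : c = sInf (insert b {R | R ∈ Set.Ico a b ∧ fp R ≤ 0})) :
    ∀ x ∈ Set.Icc a b, f x ≤ f c := by
  set T : Set ℝ := insert b {R | R ∈ Set.Ico a b ∧ fp R ≤ 0} with hT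
  have hTne : T.Nonempty := ⟨b, Set.mem_insert _ _⟩
  have hTbdd : BddBelow T := ⟨a, by
    rintro y (rfl | hy)
    · exact hab
    · exact hy.1.1⟩
  have hca : a ≤ c := hc ▸ le_csInf hTne (by
    rintro y (rfl | hy)
    · exact hab
    · exact hy.1.1)
  have hcb : c ≤ b := hc ▸ csInf_le hTbdd (Set.mem_insert _ _)
  have hcIcc : c ∈ Set.Icc a b := ⟨hca, hcb⟩
  intro x hx
  refine le_of_forall_pos_le_add fun ε hε => ?_
  obtain ⟨δ, hδ, hδ'⟩ := Metric.tendsto_nhdsWithin_nhds.mp (hcont.continuousWithinAt hcIcc) ε hε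
  rcases lt_trichotomy x c with hxc | rfl | hcx
  · -- x < c
    set t := max ((x + c)/2) (c - δ/2) with htdef
    have hxt : x < t := lt_of_lt_of_le (by linarith) (le_max_left _ _)
    have htc : t < c := max_lt (by linarith) (by linarith)
    have hct : c - t < δ := by
      have := le_max_right ((x + c)/2) (c - δ/2)
      simp only [← htdef] at this
      linarith
    have htIcc : t ∈ Set.Icc a b := ⟨le_trans hx.1 hxt.le, le_trans htc.le hcb⟩
    have hdist : |f t - f c| < ε := by
      have := hδ' htIcc (by rw [Real.dist_eq]; rw [abs_lt]; constructor <;> linarith)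
      rwa [Real.dist_eq] at this
    have htnot : t ∉ T := fun h => absurd (hc ▸ csInf_le hTbdd h) (not_le.mpr htc)
    have hfpt : 0 < fp t := by
      by_contra h
      push_neg at h
      exact htnot (Set.mem_insert_iff.mpr (Or.inr ⟨⟨le_trans hx.1 hxt.le, lt_of_lt_of_le htc hcb⟩, h⟩))
    have hA := lemA hconc hfp hx.1 hxt (lt_of_lt_of_le htc hcb)
    have hslope : 0 < (f t - f x) / (t - x) := lt_of_lt_of_le hfpt hA
    have hfx : f x < f t := by
      have h2 := mul_pos hslope (sub_pos.mpr hxt)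
      rw [div_mul_cancel₀ _ (by linarith : t - x ≠ 0)] at h2
      linarith
    have := abs_lt.mp hdist
    linarith
  · -- x = c
    linarith
  · -- c < x
    have hcb' : c < b := lt_of_lt_of_le hcx hx.2
    obtain ⟨y, hyT, hy⟩ := exists_lt_of_csInf_lt hTne (by rw [← hc]; exact lt_min hcx (by linarith) : sInf T < min x (c + δ))
    have hyx : y < x := lt_of_lt_of_le hy (min_le_left _ _)
    have hyδ : y < c + δ := lt_of_lt_of_le hy (min_le_right _ _)
    have hyc : c ≤ y := hc ▸ csInf_le hTbdd hyT
    have hyS : y ∈ Set.Ico a b ∧ fp y ≤ 0 := by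
      rcases hyT with rfl | h
      · exact absurd (lt_of_lt_of_le hyx hx.2) (lt_irrefl _)
      · exact h
    have hyIcc : y ∈ Set.Icc a b := ⟨hyS.1.1, hyS.1.2.le⟩
    have hdist : |f y - f c| < ε := by
      have := hδ' hyIcc (by rw [Real.dist_eq]; rw [abs_lt]; constructor <;> linarith)
      rwa [Real.dist_eq] at this
    have hB := lemB hconc hfp hyS.1.1 hyx hx.2
    have hfx : f x ≤ f y := by
      have h1 : (f x - f y) / (x - y) ≤ 0 := le_trans hB hyS.2
      have h2 := mul_nonpos_of_nonpos_of_nonneg h1 (sub_pos.mpr hyx).le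
      rw [div_mul_cancel₀ _ (by linarith : x - y ≠ 0)] at h2
      linarith
    have := abs_lt.mp hdist
    linarith

/-- Let `g` be continuous and concave on `[-Q̄, Q̄]` with right derivative `g'₊ = gp`,
`k ∈ ℝ`, `Q̃ ∈ [-Q̄, Q̄]`, and `φ(q) = k q + g(Q̃ - q)`.  Then `φ` is continuous and
concave on `[Q̃ - Q̄, Q̃ + Q̄]`, its left derivative satisfies
`φ'₋(q) = k - g'₊(Q̃ - q)`, and with
`Q* = min(inf {R ∈ [-Q̄, Q̄) : g'₊(R) ≤ k}, Q̄)` (inf ∅ = +∞ convention, realized by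
taking the infimum of the set with `Q̄` inserted), the point `Q̃ - Q*` maximizes `φ`
over `[0, Q̃ + Q̄]`. -/
theorem stmt6 (Qb k Qt : ℝ) (hQb : 0 < Qb) (hQt : Qt ∈ Set.Icc (-Qb) Qb)
    (g : ℝ → ℝ) (hcont : ContinuousOn g (Set.Icc (-Qb) Qb))
    (hconc : ConcaveOn ℝ (Set.Icc (-Qb) Qb) g)
    (gp : ℝ → ℝ)
    (hgp : ∀ R ∈ Set.Ico (-Qb) Qb,
      Filter.Tendsto (fun h => (g (R + h) - g R) / h) (nhdsWithin 0 (Set.Ioi 0))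
        (nhds (gp R)))
    (φ : ℝ → ℝ) (hφ : ∀ q, φ q = k * q + g (Qt - q))
    (Qstar : ℝ)
    (hQstar : Qstar = sInf (insert Qb {R | R ∈ Set.Ico (-Qb) Qb ∧ gp R ≤ k})) :
    ContinuousOn φ (Set.Icc (Qt - Qb) (Qt + Qb)) ∧
    ConcaveOn ℝ (Set.Icc (Qt - Qb) (Qt + Qb)) φ ∧
    (∀ q ∈ Set.Ioc (Qt - Qb) (Qt + Qb),
      Filter.Tendsto (fun h => (φ (q + h) - φ q) / h) (nhdsWithin 0 (Set.Iio 0))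
        (nhds (k - gp (Qt - q)))) ∧
    IsMaxOn φ (Set.Icc 0 (Qt + Qb)) (Qt - Qstar) := by

  have hφ' : φ = fun q => k * q + g (Qt - q) := funext hφ
  subst hφ'
  obtain ⟨hQt1, hQt2⟩ := hQt
  have hmaps : Set.MapsTo (fun q => Qt - q) (Set.Icc (Qt - Qb) (Qt + Qb)) (Set.Icc (-Qb) Qb) := by
    intro q hq
    simp only [Set.mem_Icc] at hq ⊢
    constructor <;> linarith [hq.1, hq.2]
  refine ⟨?_, ?_, ?_, ?_⟩
  · exact (continuousOn_const.mul continuousOn_id).add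
      (hcont.comp ((continuous_const.sub continuous_id).continuousOn) hmaps)
  · refine ⟨convex_Icc _ _, fun x hx y hy a b ha hb hab => ?_⟩
    have hx' : Qt - x ∈ Set.Icc (-Qb) Qb := hmaps hx
    have hy' : Qt - y ∈ Set.Icc (-Qb) Qb := hmaps hy
    have key := hconc.2 hx' hy' ha hb hab
    simp only [smul_eq_mul] at key ⊢
    have h1 : Qt - (a*x + b*y) = a*(Qt-x) + b*(Qt-y) := by linear_combination -Qt * hab
    rw [h1]
    have h2 : a*(k*x + g (Qt-x)) + b*(k*y + g (Qt-y))
        = k*(a*x+b*y) + (a*(g (Qt-x)) + b*(g (Qt-y))) := by ring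
    rw [h2]
    linarith [key]
  · intro q hq
    have hRmem : Qt - q ∈ Set.Ico (-Qb) Qb := ⟨by linarith [hq.2], by linarith [hq.1]⟩
    have hneg : Filter.Tendsto (fun h : ℝ => -h) (nhdsWithin 0 (Set.Iio 0))
        (nhdsWithin 0 (Set.Ioi 0)) := by
      apply tendsto_nhdsWithin_of_tendsto_nhds_of_eventually_within
      · have := (continuous_neg.tendsto (0:ℝ)).mono_left
          (nhdsWithin_le_nhds (s := Set.Iio (0:ℝ)))
        simpa using this
      · filter_upwards [self_mem_nhdsWithin] with h hh
        exact Set.mem_Ioi.mpr (neg_pos.mpr (Set.mem_Iio.mp hh))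
    have hcomp : Filter.Tendsto (fun h : ℝ => (g ((Qt - q) + -h) - g (Qt - q)) / (-h))
        (nhdsWithin 0 (Set.Iio 0)) (nhds (gp (Qt - q))) := (hgp _ hRmem).comp hneg
    have htarget : Filter.Tendsto (fun h : ℝ => k - (g ((Qt - q) + -h) - g (Qt - q)) / (-h))
        (nhdsWithin 0 (Set.Iio 0)) (nhds (k - gp (Qt - q))) := tendsto_const_nhds.sub hcomp
    refine htarget.congr' ?_
    filter_upwards [self_mem_nhdsWithin] with h hh
    have hne : h ≠ 0 := ne_of_lt (Set.mem_Iio.mp hh)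
    have e : ∀ A B : ℝ, k - (A - B) / -h = (k*(q+h) + A - (k*q + B))/h := by
      intro A B
      rw [div_neg]
      field_simp
      ring
    show k - (g (Qt - q + -h) - g (Qt - q)) / -h
        = (k*(q+h) + g (Qt - (q+h)) - (k*q + g (Qt - q)))/h
    have e1 : Qt - (q + h) = Qt - q + -h := by ring
    rw [e1]
    exact e _ _
  · -- the max part
    set f : ℝ → ℝ := fun R => g R - k * R with hf
    set fp : ℝ → ℝ := fun R => gp R - k with hfp'
    have hcontf : ContinuousOn f (Set.Icc (-Qb) Qb) :=
      hcont.sub ((continuous_const.mul continuous_id).continuousOn)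
    have hconcf : ConcaveOn ℝ (Set.Icc (-Qb) Qb) f := by
      refine ⟨convex_Icc _ _, fun x hx y hy a b ha hb hab => ?_⟩
      have key := hconc.2 hx hy ha hb hab
      simp only [smul_eq_mul, hf] at key ⊢
      have h2 : a*(g x - k*x) + b*(g y - k*y)
          = (a*(g x) + b*(g y)) - k*(a*x+b*y) := by ring
      rw [h2]
      linarith [key]
    have hfpf : ∀ R ∈ Set.Ico (-Qb) Qb,
        Filter.Tendsto (fun h => (f (R + h) - f R) / h) (nhdsWithin 0 (Set.Ioi 0))
          (nhds (fp R)) := by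
      intro R hR
      have := (hgp R hR).sub (tendsto_const_nhds (x := k))
      refine this.congr' ?_
      filter_upwards [self_mem_nhdsWithin] with h hh
      have hne : h ≠ 0 := ne_of_gt hh
      simp only [hf]
      field_simp
      ring
    have hsets : {R | R ∈ Set.Ico (-Qb) Qb ∧ gp R ≤ k}
        = {R | R ∈ Set.Ico (-Qb) Qb ∧ fp R ≤ 0} := by
      ext R
      simp only [Set.mem_setOf_eq, hfp', sub_nonpos]
    have hQstar' : Qstar = sInf (insert Qb {R | R ∈ Set.Ico (-Qb) Qb ∧ fp R ≤ 0}) := by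
      rw [hQstar, hsets]
    have hmax := maxlem (by linarith : -Qb ≤ Qb) hcontf hconcf hfpf hQstar'
    rw [isMaxOn_iff]
    intro x hx
    have hxm : Qt - x ∈ Set.Icc (-Qb) Qb := ⟨by linarith [hx.2], by linarith [hx.1]⟩
    have := hmax (Qt - x) hxm
    simp only [hf] at this
    have e : Qt - (Qt - Qstar) = Qstar := by ring
    rw [e]
    nlinarith [this]
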